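/- Let M be an SPD n×n real matrix, let K and C be symmetric positive semidefinite n×n real matrices, let h > 0 and c > 0, and assume K + M ≼ c·(h⁻²·M + C). Then K⊗M + M⊗K + M⊗M ≼ 2c·( h⁻²·(M⊗M) + C⊗M + M⊗C ). -/

import Mathlib

open Matrix Kronecker

lemma psd_kron {n : ℕ} {A B : Matrix (Fin n) (Fin n) ℝ}
    (hA : A.PosSemidef) (hB : B.PosSemidef) : (A ⊗ₖ B).PosSemidef := by
  exact hA.kronecker hB

lemma psd_smul {m : Type*} [Fintype m] {A : Matrix m m ℝ} {c : ℝ}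
    (hA : A.PosSemidef) (hc : 0 ≤ c) : (c • A).PosSemidef := by
  have h1 : Aᵀ = A := (conjTranspose_eq_transpose_of_trivial A) ▸ hA.1
  refine ⟨by rw [Matrix.IsHermitian, conjTranspose_eq_transpose_of_trivial, transpose_smul, h1],
    fun x => ?_⟩
  exact (hA.smul hc).2 x

lemma sub_kron {n : ℕ} (A B C : Matrix (Fin n) (Fin n) ℝ) :
    (A - B) ⊗ₖ C = A ⊗ₖ C - B ⊗ₖ C := by
  ext i j
  simp [kroneckerMap, sub_mul]

lemma kron_sub {n : ℕ} (A B C : Matrix (Fin n) (Fin n) ℝ) :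
    C ⊗ₖ (A - B) = C ⊗ₖ A - C ⊗ₖ B := by
  ext i j
  simp [kroneckerMap, mul_sub]

/-- robust inverse inequality for the two-dimensional smoother.
If `K + M ≼ c (h⁻² M + C)`, then
`K⊗M + M⊗K + M⊗M ≼ 2c (h⁻² (M⊗M) + C⊗M + M⊗C)`. -/
theorem stmt15 {n : ℕ} (M K C : Matrix (Fin n) (Fin n) ℝ)
    (hM : M.PosDef) (hK : K.PosSemidef) (hC : C.PosSemidef)
    (h c : ℝ) (hh : 0 < h) (hc : 0 < c)
    (hKM : (c • ((h ^ 2)⁻¹ • M + C) - (K + M)).PosSemidef) :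
    ((2 * c) • ((h ^ 2)⁻¹ • (M ⊗ₖ M) + C ⊗ₖ M + M ⊗ₖ C)
      - (K ⊗ₖ M + M ⊗ₖ K + M ⊗ₖ M)).PosSemidef := by
  set D := c • ((h ^ 2)⁻¹ • M + C) - (K + M) with hD
  have key : (2 * c) • ((h ^ 2)⁻¹ • (M ⊗ₖ M) + C ⊗ₖ M + M ⊗ₖ C)
      - (K ⊗ₖ M + M ⊗ₖ K + M ⊗ₖ M)
      = D ⊗ₖ M + M ⊗ₖ D + c • (C ⊗ₖ M) + c • (M ⊗ₖ C) + M ⊗ₖ M := by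
    rw [hD, sub_kron, kron_sub]
    simp only [Matrix.add_kronecker, Matrix.kronecker_add, Matrix.smul_kronecker,
      Matrix.kronecker_smul, smul_add]
    module
  rw [key]
  have hpsd := psd_kron hKM hM.posSemidef
  have hpsd2 := psd_kron hM.posSemidef hKM
  have hCM := psd_kron hC hM.posSemidef
  have hMC := psd_kron hM.posSemidef hC
  have hMM := psd_kron hM.posSemidef hM.posSemidef
  exact ((((hpsd.add hpsd2).add (psd_smul hCM hc.le)).add (psd_smul hMC hc.le)).add hMM)
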